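/- Let M > 0 and let E, F ≥ 0 be real numbers with |2F − E| < 1. Then there exists a twice continuously differentiable function g : [2M, ∞) → ℝ with g(s) > 0 for all s ≥ 2M, such that d/ds ( s(s − 2M) g′(s) ) = ( (E² − 1)/4 − 2MF²/s ) g(s) for all s ∈ [2M, ∞). -/

import Mathlib

open Set MeasureTheory intervalIntegral Real

namespace HardyAux

noncomputable def psi (a t : ℝ) : ℝ := t ^ (a-1) * (1-t) ^ (-a)
noncomputable def Qf (M s t : ℝ) : ℝ := 2*M*(1-t) + s*t
noncomputable def J (M a e : ℝ) (n : ℕ) (s : ℝ) : ℝ :=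
  ∫ t in (0:ℝ)..1, psi a t * t ^ n * (Qf M s t) ^ e

lemma measurable_rpow_const (c : ℝ) : Measurable fun x : ℝ => x ^ c := by
  apply measurable_of_continuousOn_compl_singleton (0 : ℝ)
  intro x hx
  exact (Real.continuousAt_rpow_const x c (Or.inl (by simpa using hx))).continuousWithinAt

lemma rpow_le_max {m R q e : ℝ} (hm : 0 < m) (h1 : m ≤ q) (h2 : q ≤ R) :
    q ^ e ≤ max (m ^ e) (R ^ e) := by
  rcases le_or_gt 0 e with he | he
  · exact le_max_of_le_right (Real.rpow_le_rpow (by linarith) h2 he)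
  · exact le_max_of_le_left (Real.rpow_le_rpow_of_nonpos hm h1 he.le)

lemma psi_nonneg {a t : ℝ} (ht0 : 0 ≤ t) (ht1 : t ≤ 1) : 0 ≤ psi a t :=
  mul_nonneg (Real.rpow_nonneg ht0 _) (Real.rpow_nonneg (by linarith) _)

lemma psi_pos {a t : ℝ} (ht0 : 0 < t) (ht1 : t < 1) : 0 < psi a t :=
  mul_pos (Real.rpow_pos_of_pos ht0 _) (Real.rpow_pos_of_pos (by linarith) _)

lemma Qf_bounds {M x R t : ℝ} (hM : 0 < M) (hx : M < x) (hxR : x ≤ R)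
    (ht0 : 0 ≤ t) (ht1 : t ≤ 1) : M ≤ Qf M x t ∧ Qf M x t ≤ 2*M + R := by
  unfold Qf
  constructor
  · nlinarith
  · nlinarith

lemma Qf_pos {M x t : ℝ} (hM : 0 < M) (hx : M < x) (ht0 : 0 ≤ t) (ht1 : t ≤ 1) :
    0 < Qf M x t := lt_of_lt_of_le hM (Qf_bounds hM hx le_rfl ht0 ht1).1

lemma Qf_hasDerivAt (M s t : ℝ) : HasDerivAt (fun u : ℝ => Qf M s u) (s - 2*M) t := by
  unfold Qf
  have h := (((hasDerivAt_id t).const_sub 1).const_mul (2*M)).add ((hasDerivAt_id t).const_mul s)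
  refine h.congr_deriv ?_
  ring

lemma integrand_measurable (M a e : ℝ) (n : ℕ) (x : ℝ) :
    Measurable (fun t : ℝ => psi a t * t ^ n * (Qf M x t) ^ e) := by
  have h1 : Measurable (psi a) := (measurable_rpow_const (a-1)).mul
    ((measurable_rpow_const (-a)).comp (measurable_const.sub measurable_id))
  have h2 : Measurable (fun t : ℝ => (Qf M x t) ^ e) :=
    (measurable_rpow_const e).comp (by unfold Qf; fun_prop)
  exact (h1.mul (measurable_id.pow_const n)).mul h2

lemma psi_integrable {a : ℝ} (ha0 : 0 < a) (ha1 : a < 1) :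
    IntervalIntegrable (psi a) volume 0 1 := by
  have hmeas : ∀ c d : ℝ, AEStronglyMeasurable (psi a)
      (volume.restrict (uIoc c d)) := fun c d => ((measurable_rpow_const (a-1)).mul
    ((measurable_rpow_const (-a)).comp (measurable_const.sub measurable_id))).aestronglyMeasurable
  have h1 : IntervalIntegrable (psi a) volume 0 (1/2) := by
    apply IntervalIntegrable.mono_fun'
      (g := fun t : ℝ => ((1:ℝ)/2) ^ (-a) * t ^ (a-1))
      ((intervalIntegrable_rpow' (by linarith)).const_mul _) (hmeas 0 (1/2)) ?_
    filter_upwards [ae_restrict_mem measurableSet_uIoc] with t ht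
    rw [uIoc_of_le (by norm_num : (0:ℝ) ≤ 1/2)] at ht
    obtain ⟨ht0, ht1⟩ := ht
    have h1t : (0:ℝ) < 1 - t := by linarith
    unfold psi
    rw [Real.norm_eq_abs, abs_mul, abs_of_nonneg (Real.rpow_nonneg ht0.le _),
      abs_of_nonneg (Real.rpow_nonneg h1t.le _), mul_comm]
    exact mul_le_mul_of_nonneg_right
      (Real.rpow_le_rpow_of_nonpos (by norm_num) (by linarith) (by linarith))
      (Real.rpow_nonneg ht0.le _)
  have h2' : IntervalIntegrable (fun t : ℝ => (1-t) ^ (-a)) volume (1/2) 1 := by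
    have := (intervalIntegrable_rpow' (r := -a) (by linarith)
      (a := 0) (b := 1/2)).comp_sub_left 1
    norm_num at this
    exact this.symm
  have h2 : IntervalIntegrable (psi a) volume (1/2) 1 := by
    apply IntervalIntegrable.mono_fun'
      (g := fun t : ℝ => ((1:ℝ)/2) ^ (a-1) * (1-t) ^ (-a))
      (h2'.const_mul _) (hmeas (1/2) 1) ?_
    filter_upwards [ae_restrict_mem measurableSet_uIoc] with t ht
    rw [uIoc_of_le (by norm_num : (1:ℝ)/2 ≤ 1)] at ht
    obtain ⟨ht0, ht1⟩ := ht
    have h1t : (0:ℝ) ≤ 1 - t := by linarith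
    unfold psi
    rw [Real.norm_eq_abs, abs_mul, abs_of_nonneg (Real.rpow_nonneg (by linarith) _),
      abs_of_nonneg (Real.rpow_nonneg h1t _)]
    exact mul_le_mul_of_nonneg_right
      (Real.rpow_le_rpow_of_nonpos (by norm_num) ht0.le (by linarith))
      (Real.rpow_nonneg h1t _)
  exact h1.trans h2

lemma integrand_integrable {M a : ℝ} (hM : 0 < M) (ha0 : 0 < a) (ha1 : a < 1)
    {x : ℝ} (hx : M < x) (e : ℝ) (n : ℕ) :
    IntervalIntegrable (fun t : ℝ => psi a t * t ^ n * (Qf M x t) ^ e) volume 0 1 := by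
  set C := max (M ^ e) ((2*M + x) ^ e) with hC
  apply IntervalIntegrable.mono_fun' (g := fun t => C * psi a t)
    ((psi_integrable ha0 ha1).const_mul C)
    (integrand_measurable M a e n x).aestronglyMeasurable
  filter_upwards [ae_restrict_mem measurableSet_uIoc] with t ht
  rw [uIoc_of_le (by norm_num : (0:ℝ) ≤ 1)] at ht
  obtain ⟨ht0, ht1⟩ := ht
  obtain ⟨hq1, hq2⟩ := Qf_bounds hM hx le_rfl ht0.le ht1
  have hψ := psi_nonneg (a := a) ht0.le ht1
  have hqe : (Qf M x t) ^ e ≤ C := rpow_le_max hM hq1 hq2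
  have htn : t ^ n ≤ 1 := pow_le_one₀ ht0.le ht1
  rw [Real.norm_eq_abs, abs_of_nonneg (mul_nonneg (mul_nonneg hψ (pow_nonneg ht0.le n))
    (Real.rpow_nonneg (by linarith) e))]
  calc psi a t * t ^ n * (Qf M x t) ^ e ≤ psi a t * 1 * C := by
        apply mul_le_mul (mul_le_mul_of_nonneg_left htn hψ) hqe
          (Real.rpow_nonneg (by linarith) _) (by positivity)
    _ = C * psi a t := by ring

lemma hasDerivAt_J {M a : ℝ} (hM : 0 < M) (ha0 : 0 < a) (ha1 : a < 1)
    {s : ℝ} (hs : M < s) (e : ℝ) (n : ℕ) :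
    HasDerivAt (J M a e n) (e * J M a (e-1) (n+1) s) s := by
  set ε := (s - M)/2 with hε
  have hε0 : 0 < ε := by simp [hε]; linarith
  have hball : ∀ x ∈ Metric.ball s ε, M < x ∧ x ≤ s + ε := by
    intro x hx
    rw [Metric.mem_ball, Real.dist_eq, abs_lt] at hx
    constructor <;> [skip; linarith]
    have : s - ε = (s+M)/2 := by rw [hε]; ring
    nlinarith [hx.1]
  set C := |e| * max (M ^ (e-1)) ((2*M + (s+ε)) ^ (e-1)) with hC
  have key := intervalIntegral.hasDerivAt_integral_of_dominated_loc_of_deriv_le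
    (F := fun x t => psi a t * t ^ n * (Qf M x t) ^ e)
    (F' := fun x t => e * (psi a t * t ^ (n+1) * (Qf M x t) ^ (e-1)))
    (x₀ := s) (a := 0) (b := 1) (μ := volume)
    (bound := fun t => C * psi a t) (Metric.ball_mem_nhds s hε0)
    ?_ (integrand_integrable hM ha0 ha1 hs e n) ?_ ?_
    ((psi_integrable ha0 ha1).const_mul C) ?_
  · have h2 := key.2
    simp only [intervalIntegral.integral_const_mul] at h2
    exact h2
  · filter_upwards with x
    exact (integrand_measurable M a e n x).aestronglyMeasurable
  · exact ((integrand_measurable M a (e-1) (n+1) s).const_mul e).aestronglyMeasurable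
  · refine Filter.Eventually.of_forall (fun t ht => ?_)
    rw [uIoc_of_le (by norm_num : (0:ℝ) ≤ 1)] at ht
    obtain ⟨ht0, ht1⟩ := ht
    intro x hx
    obtain ⟨hxM, hxR⟩ := hball x hx
    obtain ⟨hq1, hq2⟩ := Qf_bounds hM hxM hxR ht0.le ht1
    have hψ := psi_nonneg (a := a) ht0.le ht1
    have hqe : (Qf M x t) ^ (e-1) ≤ max (M ^ (e-1)) ((2*M + (s+ε)) ^ (e-1)) :=
      rpow_le_max hM hq1 hq2
    have htn : t ^ (n+1) ≤ 1 := pow_le_one₀ ht0.le ht1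
    rw [Real.norm_eq_abs, abs_mul, abs_of_nonneg (mul_nonneg (mul_nonneg hψ
      (pow_nonneg ht0.le (n+1))) (Real.rpow_nonneg (by linarith) (e-1)))]
    calc |e| * (psi a t * t ^ (n+1) * (Qf M x t) ^ (e-1))
        ≤ |e| * (psi a t * 1 * max (M ^ (e-1)) ((2*M + (s+ε)) ^ (e-1))) := by
          apply mul_le_mul_of_nonneg_left _ (abs_nonneg e)
          apply mul_le_mul (mul_le_mul_of_nonneg_left htn hψ) hqe
            (Real.rpow_nonneg (by linarith) _) (by positivity)
      _ = C * psi a t := by rw [hC]; ring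
  · refine Filter.Eventually.of_forall (fun t ht => ?_)
    rw [uIoc_of_le (by norm_num : (0:ℝ) ≤ 1)] at ht
    obtain ⟨ht0, ht1⟩ := ht
    intro x hx
    obtain ⟨hxM, _⟩ := hball x hx
    have hQpos : 0 < Qf M x t := Qf_pos hM hxM ht0.le ht1
    have hQd : HasDerivAt (fun y : ℝ => Qf M y t) t x := by
      unfold Qf
      simpa using ((hasDerivAt_id x).mul_const t).const_add (2*M*(1-t))
    have h1 := hQd.rpow_const (p := e) (Or.inl hQpos.ne')
    have h2 := h1.const_mul (psi a t * t ^ n)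
    refine h2.congr_deriv ?_
    ring

lemma J_pos {M a : ℝ} (hM : 0 < M) (ha0 : 0 < a) (ha1 : a < 1)
    {s : ℝ} (hs : M < s) (e : ℝ) : 0 < J M a e 0 s := by
  apply intervalIntegral_pos_of_pos_on (integrand_integrable hM ha0 ha1 hs e 0) ?_ one_pos
  intro t ht
  have := psi_pos (a := a) ht.1 ht.2
  have := Real.rpow_pos_of_pos (Qf_pos hM hs ht.1.le ht.2.le) e
  simp only [pow_zero, mul_one]
  positivity

lemma keyDeriv {M E F s t a b : ℝ} (hM : 0 < M) (hs : M < s)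
    (ht0 : 0 < t) (ht1 : t < 1) (hQ : 0 < Qf M s t)
    (ha : a = (1+E-2*F)/2) (hb : b = (1-E-2*F)/2) :
    HasDerivAt (fun u => 2*M*b*(u^a*(1-u)^(1-a)*(Qf M s u)^(-b-1)))
      (s*(s-2*M)*(b*(b+1)) * (psi a t * t^(2:ℕ) * (Qf M s t)^(-b-2))
       + (((2-2*F)*s-(2-4*F)*M)*(-b) * (psi a t * t^(1:ℕ) * (Qf M s t)^(-b-1))
       + (F^2-F-(E^2-1)/4) * (psi a t * t^(0:ℕ) * (Qf M s t)^(-b)))) t := by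
  have h1t : (0:ℝ) < 1 - t := by linarith
  have h1 : HasDerivAt (fun u : ℝ => u ^ a) (a * t ^ (a-1)) t :=
    Real.hasDerivAt_rpow_const (Or.inl ht0.ne')
  have hbase : HasDerivAt (fun u : ℝ => 1 - u) (-1) t := (hasDerivAt_id t).const_sub 1
  have h2 := hbase.rpow_const (p := 1-a) (Or.inl h1t.ne')
  have h3 := (Qf_hasDerivAt M s t).rpow_const (p := -b-1) (Or.inl hQ.ne')
  have hprod := ((h1.mul h2).mul h3).const_mul (2*M*b)
  refine hprod.congr_deriv ?_
  have e1 : t ^ a = t^(a-1) * t := by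
    rw [← Real.rpow_add_one ht0.ne' (a-1)]; congr 1; ring
  have e2 : (1-t) ^ (1-a) = (1-t)^(-a) * (1-t) := by
    rw [← Real.rpow_add_one h1t.ne' (-a)]; congr 1; ring
  have e2' : (1-t) ^ (1-a-1) = (1-t)^(-a) := by rw [show 1-a-1 = -a by ring]
  have e3 : (Qf M s t) ^ (-b-1) = (Qf M s t)^(-b-2) * Qf M s t := by
    rw [← Real.rpow_add_one hQ.ne' (-b-2)]; congr 1; ring
  have e3' : (Qf M s t) ^ (-b-1-1) = (Qf M s t)^(-b-2) := by rw [show -b-1-1 = -b-2 by ring]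
  have e4 : (Qf M s t) ^ (-b) = (Qf M s t)^(-b-2) * Qf M s t * Qf M s t := by
    rw [← Real.rpow_add_one hQ.ne' (-b-2), ← Real.rpow_add_one hQ.ne' (-b-2+1)]
    congr 1; ring
  simp only [Pi.mul_apply, psi, e1, e2, e2', e3, e3', e4]
  simp only [Qf]
  subst ha hb
  ring

lemma intId {M E F s a b : ℝ} (hM : 0 < M) (hs : M < s)
    (ha : a = (1+E-2*F)/2) (hb : b = (1-E-2*F)/2) (ha0 : 0 < a) (ha1 : a < 1) :
    s*(s-2*M)*(b*(b+1)) * J M a (-b-2) 2 s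
      + (((2-2*F)*s-(2-4*F)*M)*(-b) * J M a (-b-1) 1 s
      + (F^2-F-(E^2-1)/4) * J M a (-b) 0 s) = 0 := by
  have hi2 := integrand_integrable hM ha0 ha1 hs (-b-2) 2
  have hi1 := integrand_integrable hM ha0 ha1 hs (-b-1) 1
  have hi0 := integrand_integrable hM ha0 ha1 hs (-b) 0
  set c2 := s*(s-2*M)*(b*(b+1)) with hc2
  set c1 := ((2-2*F)*s-(2-4*F)*M)*(-b) with hc1
  set c0 := (F^2-F-(E^2-1)/4) with hc0
  have key : (∫ t in (0:ℝ)..1,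
      (c2 * (psi a t * t^(2:ℕ) * (Qf M s t)^(-b-2))
        + (c1 * (psi a t * t^(1:ℕ) * (Qf M s t)^(-b-1))
        + c0 * (psi a t * t^(0:ℕ) * (Qf M s t)^(-b))))) = 0 := by
    have h1t : ContinuousOn
        (fun u => 2*M*b*(u^a*(1-u)^(1-a)*(Qf M s u)^(-b-1))) (Icc 0 1) := by
      have ca : Continuous fun u : ℝ => u ^ a :=
        continuous_iff_continuousAt.mpr fun x => Real.continuousAt_rpow_const x a (Or.inr ha0.le)
      have cb : Continuous fun u : ℝ => (1-u) ^ (1-a) := by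
        have : Continuous fun y : ℝ => y ^ (1-a) := continuous_iff_continuousAt.mpr
          fun x => Real.continuousAt_rpow_const x (1-a) (Or.inr (by linarith))
        exact this.comp (continuous_const.sub continuous_id)
      have cq : ContinuousOn (fun u : ℝ => (Qf M s u) ^ (-b-1)) (Icc 0 1) := by
        intro x hx
        refine (ContinuousAt.continuousWithinAt ?_)
        apply ContinuousAt.rpow_const
        · unfold Qf; fun_prop
        · exact Or.inl (Qf_pos hM hs hx.1 hx.2).ne'
      exact continuousOn_const.mul (((ca.mul cb).continuousOn).mul cq)
    have hderiv : ∀ t ∈ Ioo (0:ℝ) 1,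
        HasDerivAt (fun u => 2*M*b*(u^a*(1-u)^(1-a)*(Qf M s u)^(-b-1)))
          (c2 * (psi a t * t^(2:ℕ) * (Qf M s t)^(-b-2))
            + (c1 * (psi a t * t^(1:ℕ) * (Qf M s t)^(-b-1))
            + c0 * (psi a t * t^(0:ℕ) * (Qf M s t)^(-b)))) t := by
      intro t ht
      exact keyDeriv hM hs ht.1 ht.2 (Qf_pos hM hs ht.1.le ht.2.le) ha hb
    have hint : IntervalIntegrable (fun t =>
        c2 * (psi a t * t^(2:ℕ) * (Qf M s t)^(-b-2))
          + (c1 * (psi a t * t^(1:ℕ) * (Qf M s t)^(-b-1))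
          + c0 * (psi a t * t^(0:ℕ) * (Qf M s t)^(-b)))) volume 0 1 :=
      (hi2.const_mul c2).add ((hi1.const_mul c1).add (hi0.const_mul c0))
    rw [integral_eq_sub_of_hasDerivAt_of_le (by norm_num) h1t hderiv hint]
    have hz0 : (0:ℝ) ^ a = 0 := Real.zero_rpow ha0.ne'
    have hz1 : (0:ℝ) ^ (1-a) = 0 := Real.zero_rpow (by linarith)
    simp [hz0, hz1]
  rw [intervalIntegral.integral_add (hi2.const_mul c2)
    ((hi1.const_mul c1).add (hi0.const_mul c0)),
    intervalIntegral.integral_add (hi1.const_mul c1) (hi0.const_mul c0),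
    intervalIntegral.integral_const_mul, intervalIntegral.integral_const_mul,
    intervalIntegral.integral_const_mul] at key
  simpa [J] using key

end HardyAux

open HardyAux

theorem exists_positive_solution_hardy_ode
    (M E F : ℝ) (hM : 0 < M) (hE0 : 0 ≤ E) (hF0 : 0 ≤ F)
    (hEF : |2*F - E| < 1) :
    ∃ g : ℝ → ℝ, ContDiffOn ℝ 2 g (Ici (2*M)) ∧
      (∀ s ∈ Ici (2*M), 0 < g s) ∧
      (∀ s ∈ Ici (2*M),
        deriv (fun t => t*(t - 2*M) * deriv g t) s
          = ((E^2 - 1)/4 - 2*M*F^2/s) * g s) := by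
  obtain ⟨hEF1, hEF2⟩ := abs_lt.mp hEF
  set a := (1+E-2*F)/2 with ha
  set b := (1-E-2*F)/2 with hb
  have ha0 : 0 < a := by rw [ha]; linarith
  have ha1 : a < 1 := by rw [ha]; linarith
  set g : ℝ → ℝ := fun s => s ^ (-F) * J M a (-b) 0 s with hgdef
  -- derivatives of the J-pieces
  have hJ0 : ∀ s, M < s → HasDerivAt (J M a (-b) 0) (-b * J M a (-b-1) 1 s) s := by
    intro s hs
    exact hasDerivAt_J hM ha0 ha1 hs (-b) 0
  have hJ1 : ∀ s, M < s →
      HasDerivAt (fun u => -b * J M a (-b-1) 1 u) (b*(b+1) * J M a (-b-2) 2 s) s := by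
    intro s hs
    have h := (hasDerivAt_J hM ha0 ha1 hs (-b-1) 1).const_mul (-b)
    rw [show -b-1-1 = -b-2 by ring] at h
    refine h.congr_deriv ?_
    ring
  have hJ2 : ∀ s, M < s →
      HasDerivAt (fun u => b*(b+1) * J M a (-b-2) 2 u)
        ((b*(b+1)*(-b-2)) * J M a (-b-2-1) 3 s) s := by
    intro s hs
    have h := (hasDerivAt_J hM ha0 ha1 hs (-b-2) 2).const_mul (b*(b+1))
    refine h.congr_deriv ?_
    ring
  -- derivative of g
  have hgd : ∀ s, M < s → HasDerivAt g
      (-F * s^(-F-1) * J M a (-b) 0 s + s^(-F) * (-b * J M a (-b-1) 1 s)) s := by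
    intro s hs
    have sne : s ≠ 0 := (hM.trans hs).ne'
    have hr : HasDerivAt (fun u : ℝ => u ^ (-F)) (-F * s^(-F-1)) s :=
      Real.hasDerivAt_rpow_const (Or.inl sne)
    exact hr.mul (hJ0 s hs)
  set G1 : ℝ → ℝ := fun u =>
    -F * u^(-F-1) * J M a (-b) 0 u + u^(-F) * (-b * J M a (-b-1) 1 u) with hG1def
  set G2 : ℝ → ℝ := fun u =>
    (-F*((-F-1) * u^(-F-1-1))) * J M a (-b) 0 u + (-F * u^(-F-1)) * (-b * J M a (-b-1) 1 u)
    + ((-F * u^(-F-1)) * (-b * J M a (-b-1) 1 u) + u^(-F) * (b*(b+1) * J M a (-b-2) 2 u))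
    with hG2def
  have hG1d : ∀ s, M < s → HasDerivAt G1 (G2 s) s := by
    intro s hs
    have sne : s ≠ 0 := (hM.trans hs).ne'
    have part1 := ((Real.hasDerivAt_rpow_const (x := s) (p := -F-1)
      (Or.inl sne)).const_mul (-F)).mul (hJ0 s hs)
    have part2 := (Real.hasDerivAt_rpow_const (x := s) (p := -F)
      (Or.inl sne)).mul (hJ1 s hs)
    exact part1.add part2
  -- continuity of G2 on Ioi M
  have hG2cont : ContinuousOn G2 (Ioi M) := by
    intro x hx
    have hxM : M < x := hx
    have sne : x ≠ 0 := (hM.trans hxM).ne'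
    have c0 : ContinuousAt (J M a (-b) 0) x := (hJ0 x hxM).continuousAt
    have c1 : ContinuousAt (fun u => -b * J M a (-b-1) 1 u) x := (hJ1 x hxM).continuousAt
    have c2 : ContinuousAt (fun u => b*(b+1) * J M a (-b-2) 2 u) x := (hJ2 x hxM).continuousAt
    have r1 : ContinuousAt (fun u : ℝ => u ^ (-F-1-1)) x :=
      Real.continuousAt_rpow_const x _ (Or.inl sne)
    have r2 : ContinuousAt (fun u : ℝ => u ^ (-F-1)) x :=
      Real.continuousAt_rpow_const x _ (Or.inl sne)
    have r3 : ContinuousAt (fun u : ℝ => u ^ (-F)) x :=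
      Real.continuousAt_rpow_const x _ (Or.inl sne)
    apply ContinuousAt.continuousWithinAt
    exact (((r1.const_mul (-F-1)).const_mul (-F)).mul c0).add
      ((r2.const_mul (-F)).mul c1) |>.add
      (((r2.const_mul (-F)).mul c1).add (r3.mul c2))
  have hsubset : Ici (2*M) ⊆ Ioi M := fun x hx => lt_of_lt_of_le (by linarith : M < 2*M) hx
  refine ⟨g, ?_, ?_, ?_⟩
  · -- ContDiffOn
    apply ContDiffOn.mono _ hsubset
    rw [show (2 : WithTop ℕ∞) = 1 + 1 by norm_num,
      contDiffOn_succ_iff_deriv_of_isOpen isOpen_Ioi]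
    refine ⟨fun x hx => ((hgd x hx).differentiableAt).differentiableWithinAt, by simp, ?_⟩
    have hc1 : ContDiffOn ℝ 1 G1 (Ioi M) := by
      rw [show (1 : WithTop ℕ∞) = 0 + 1 by norm_num,
        contDiffOn_succ_iff_deriv_of_isOpen isOpen_Ioi]
      refine ⟨fun x hx => ((hG1d x hx).differentiableAt).differentiableWithinAt, by simp, ?_⟩
      rw [contDiffOn_zero]
      exact hG2cont.congr (fun x hx => (hG1d x hx).deriv)
    exact hc1.congr (fun x hx => (hgd x hx).deriv)
  · -- positivity
    intro s hs
    have hsM : M < s := hsubset hs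
    exact mul_pos (Real.rpow_pos_of_pos (hM.trans hsM) _) (J_pos hM ha0 ha1 hsM (-b))
  · -- the ODE
    intro s hs
    have hsM : M < s := hsubset hs
    have sne : s ≠ 0 := (hM.trans hsM).ne'
    have hev : (fun t => t*(t - 2*M) * deriv g t) =ᶠ[nhds s]
        (fun t => t*(t - 2*M) * G1 t) := by
      filter_upwards [Ioi_mem_nhds hsM] with t ht
      rw [(hgd t ht).deriv]
    rw [hev.deriv_eq]
    have hD : HasDerivAt (fun t => t*(t - 2*M) * G1 t)
        ((1*(s - 2*M) + s*1) * G1 s + s*(s - 2*M) * G2 s) s :=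
      ((hasDerivAt_id s).mul ((hasDerivAt_id s).sub_const (2*M))).mul (hG1d s hsM)
    rw [hD.deriv]
    have hIntId := intId (E := E) (F := F) hM hsM ha hb ha0 ha1
    have h1 : s ^ (-F-1) = s^(-F-1-1) * s := by
      rw [← Real.rpow_add_one sne (-F-1-1)]; congr 1; ring
    have h2 : s ^ (-F) = s^(-F-1-1) * s * s := by
      rw [← Real.rpow_add_one sne (-F-1-1), ← Real.rpow_add_one sne (-F-1-1+1)]
      congr 1; ring
    simp only [hgdef, hG1def, hG2def]
    rw [h2, h1, div_eq_mul_inv]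
    have hinv : s⁻¹ * s = 1 := inv_mul_cancel₀ sne
    linear_combination (s^(-F-1-1) * s * s) * hIntId
      + (2*M*F^2 * s^(-F-1-1) * s * (J M a (-b) 0 s)) * hinv
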